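/- arXiv:2504.16495 — 3 statements merged into one kernel-verified Lean document; each statement's English description precedes it below -/
import Mathlib

section
/- Let (A, ·) be a perm algebra and r ∈ A ⊗ A such that r − σ(r) is (R, ad)-invariant. Then r is a solution of the perm Yang-Baxter equation if and only if T_{σ(r)}(a*) · T_{σ(r)}(b*) = T_{σ(r)}(L*(Tᵣ(a*))b* + ad*(T_{σ(r)}(b*))a*) for all a*, b* ∈ A*. -/
open TensorProduct

section
variable {K : Type*} [Field K] {A : Type*} [AddCommGroup A] [Module K A]

/-- perm identity for a plain binary operation -/
def IsPermFn {X : Type*} (mu : X → X → X) : Prop :=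
  ∀ a b c : X, mu a (mu b c) = mu (mu a b) c ∧ mu (mu a b) c = mu (mu b a) c

/-- perm algebra: bundled bilinear multiplication satisfying the perm identities -/
def IsPermMul (m : A →ₗ[K] A →ₗ[K] A) : Prop :=
  ∀ a b c : A, m a (m b c) = m (m a b) c ∧ m (m a b) c = m (m b a) c

/-- The map `T_r : A* → A` associated with a 2-tensor `r ∈ A ⊗ A`,
`T_r(a*) = Σ ⟨a*, a_i⟩ b_i` for `r = Σ a_i ⊗ b_i`. -/
noncomputable def Tten (r : A ⊗[K] A) : Module.Dual K A →ₗ[K] A :=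
  TensorProduct.lift (LinearMap.mk₂ K
    (fun a b => (Module.Dual.eval K A a).smulRight b)
    (by intro a a' b; ext f; simp [add_smul])
    (by intro c a b; ext f; simp [mul_smul])
    (by intro a b b'; ext f; simp [smul_add])
    (by intro c a b; ext f; simp [smul_comm c])) r

noncomputable def mulT (m : A →ₗ[K] A →ₗ[K] A) : A ⊗[K] A →ₗ[K] A := TensorProduct.lift m

noncomputable def p13_23 (m : A →ₗ[K] A →ₗ[K] A) :
    (A ⊗[K] A) ⊗[K] (A ⊗[K] A) →ₗ[K] (A ⊗[K] A) ⊗[K] A :=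
  (TensorProduct.map LinearMap.id (mulT m)) ∘ₗ
    (TensorProduct.tensorTensorTensorComm K A A A A).toLinearMap

noncomputable def p12_13 (m : A →ₗ[K] A →ₗ[K] A) :
    (A ⊗[K] A) ⊗[K] (A ⊗[K] A) →ₗ[K] (A ⊗[K] A) ⊗[K] A :=
  (TensorProduct.assoc K A A A).symm.toLinearMap ∘ₗ
    (TensorProduct.map (mulT m) LinearMap.id) ∘ₗ
    (TensorProduct.tensorTensorTensorComm K A A A A).toLinearMap

noncomputable def p13_12 (m : A →ₗ[K] A →ₗ[K] A) :
    (A ⊗[K] A) ⊗[K] (A ⊗[K] A) →ₗ[K] (A ⊗[K] A) ⊗[K] A :=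
  (TensorProduct.assoc K A A A).symm.toLinearMap ∘ₗ
    (TensorProduct.map (mulT m) (TensorProduct.comm K A A).toLinearMap) ∘ₗ
    (TensorProduct.tensorTensorTensorComm K A A A A).toLinearMap

noncomputable def p12_23 (m : A →ₗ[K] A →ₗ[K] A) :
    (A ⊗[K] A) ⊗[K] (A ⊗[K] A) →ₗ[K] (A ⊗[K] A) ⊗[K] A :=
  (TensorProduct.assoc K A A A).symm.toLinearMap ∘ₗ
    (TensorProduct.leftComm K A A A).toLinearMap ∘ₗ
    (TensorProduct.map (mulT m) LinearMap.id) ∘ₗ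
    (TensorProduct.tensorTensorTensorComm K A A A A).toLinearMap ∘ₗ
    (TensorProduct.map (TensorProduct.comm K A A).toLinearMap LinearMap.id)

/-- `[[r,r]] = r₁₂·r₂₃ − r₁₃·r₂₃ + r₁₂·r₁₃ − r₁₃·r₁₂` -/
noncomputable def ybrac (m : A →ₗ[K] A →ₗ[K] A) (r : A ⊗[K] A) : (A ⊗[K] A) ⊗[K] A :=
  p12_23 m (r ⊗ₜ r) - p13_23 m (r ⊗ₜ r) + p12_13 m (r ⊗ₜ r) - p13_12 m (r ⊗ₜ r)

/-- the perm Yang-Baxter equation -/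
noncomputable def IsPYBESol (m : A →ₗ[K] A →ₗ[K] A) (r : A ⊗[K] A) : Prop := ybrac m r = 0

/-- `(id ⊗ R(a) − ad(a) ⊗ id)(s) = 0` for all `a`. -/
def RadInv (m : A →ₗ[K] A →ₗ[K] A) (s : A ⊗[K] A) : Prop :=
  ∀ a : A, TensorProduct.map LinearMap.id (m.flip a) s
    = TensorProduct.map (m a - m.flip a) LinearMap.id s

variable {V : Type*} [AddCommGroup V] [Module K V]

/-- representation of a perm algebra -/
def IsPermRep (m : A →ₗ[K] A →ₗ[K] A) (l rr : A →ₗ[K] V →ₗ[K] V) : Prop :=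
  ∀ a b : A, l (m a b) = l a ∘ₗ l b ∧ l a ∘ₗ l b = l b ∘ₗ l a ∧
    rr (m a b) = rr b ∘ₗ rr a ∧ rr b ∘ₗ rr a = rr b ∘ₗ l a ∧ rr b ∘ₗ l a = l a ∘ₗ rr b

/-- A-perm algebra -/
def IsAPermAlg (m : A →ₗ[K] A →ₗ[K] A) (l rr : A →ₗ[K] V →ₗ[K] V)
    (mV : V →ₗ[K] V →ₗ[K] V) : Prop :=
  IsPermRep m l rr ∧ IsPermMul mV ∧
  (∀ (a : A) (u w : V), rr a (mV u w) = rr a (mV w u) ∧ rr a (mV u w) = mV u (rr a w)) ∧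
  (∀ (a : A) (u w : V), mV (l a u) w = mV (rr a u) w ∧ mV (l a u) w = l a (mV u w) ∧
    l a (mV u w) = mV u (l a w))



section pybeHelpers
variable {K : Type*} [Field K] {V W V' W' : Type*} [AddCommGroup V] [Module K V]
  [AddCommGroup W] [Module K W] [AddCommGroup V'] [Module K V'] [AddCommGroup W'] [Module K W']

noncomputable def ctrP (f : Module.Dual K V) : V ⊗[K] W →ₗ[K] W :=
  TensorProduct.lift ((LinearMap.lsmul K W) ∘ₗ f)

@[simp] lemma ctrP_tmul (f : Module.Dual K V) (v : V) (w : W) :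
    (ctrP f) (v ⊗ₜ[K] w) = f v • w := rfl

lemma ctrP_add_left (f g : Module.Dual K V) (u : V ⊗[K] W) :
    ctrP (f + g) u = ctrP f u + ctrP g u := by
  induction u using TensorProduct.induction_on with
  | zero => simp
  | tmul v w => simp [add_smul]
  | add x y hx hy => simp only [map_add, hx, hy]; abel

lemma ctrP_sub_left (f g : Module.Dual K V) (u : V ⊗[K] W) :
    ctrP (f - g) u = ctrP f u - ctrP g u := by
  induction u using TensorProduct.induction_on with
  | zero => simp
  | tmul v w => simp [sub_smul]
  | add x y hx hy => simp only [map_add, hx, hy]; abel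

@[simp] lemma ctrP_zero_left (u : V ⊗[K] W) : ctrP (0 : Module.Dual K V) u = 0 := by
  induction u using TensorProduct.induction_on with
  | zero => simp
  | tmul v w => simp
  | add x y hx hy => simp [map_add, hx, hy]

lemma ctrP_eq_zero [FiniteDimensional K V] (u : V ⊗[K] W) (h : ∀ f, ctrP f u = 0) : u = 0 := by
  have key : ∀ (x : V ⊗[K] W) (f : Module.Dual K V),
      dualTensorHom K (Module.Dual K V) W
        (TensorProduct.map (Module.Dual.eval K V) LinearMap.id x) f = ctrP f x := by
    intro x f
    induction x using TensorProduct.induction_on with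
    | zero => simp
    | tmul v w => simp
    | add x y hx hy => simp [map_add, hx, hy]
  have hmap :
      (dualTensorHom K (Module.Dual K V) W ∘ₗ
        TensorProduct.map (Module.Dual.eval K V) LinearMap.id)
      = ((dualTensorHomEquiv K (Module.Dual K V) W).toLinearMap ∘ₗ
        (TensorProduct.congr (Module.evalEquiv K V) (LinearEquiv.refl K W)).toLinearMap) := by
    apply TensorProduct.ext'
    intro v w
    simp [TensorProduct.congr_tmul, dualTensorHomEquiv]
  have hinj : Function.Injective (⇑(dualTensorHom K (Module.Dual K V) W ∘ₗ
      TensorProduct.map (Module.Dual.eval K V) LinearMap.id)) := by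
    rw [hmap]
    simp only [LinearMap.coe_comp, LinearEquiv.coe_coe]
    exact (LinearEquiv.injective _).comp (LinearEquiv.injective _)
  apply hinj
  rw [map_zero]
  ext f
  rw [LinearMap.coe_comp, Function.comp_apply, key]
  simp [h f]

lemma ctrP_map_right (f : Module.Dual K V) (ψ : W →ₗ[K] W') (s : V ⊗[K] W) :
    ctrP f (TensorProduct.map LinearMap.id ψ s) = ψ (ctrP f s) := by
  induction s using TensorProduct.induction_on with
  | zero => simp
  | tmul v w => simp
  | add x y hx hy => simp [map_add, hx, hy]

lemma ctrP_map_left (f : Module.Dual K V') (φ : V →ₗ[K] V') (s : V ⊗[K] W) :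
    ctrP f (TensorProduct.map φ LinearMap.id s) = ctrP (φ.dualMap f) s := by
  induction s using TensorProduct.induction_on with
  | zero => simp
  | tmul v w => simp
  | add x y hx hy => simp [map_add, hx, hy]

lemma comm_map_swap (φ : V →ₗ[K] V') (ψ : W →ₗ[K] W') (s : V ⊗[K] W) :
    TensorProduct.comm K V' W' (TensorProduct.map φ ψ s)
      = TensorProduct.map ψ φ (TensorProduct.comm K V W s) := by
  induction s using TensorProduct.induction_on with
  | zero => simp
  | tmul v w => simp
  | add x y hx hy => simp [map_add, hx, hy]

lemma comm_comm_self (s : V ⊗[K] W) :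
    TensorProduct.comm K W V (TensorProduct.comm K V W s) = s := by
  induction s using TensorProduct.induction_on with
  | zero => simp
  | tmul v w => simp
  | add x y hx hy => simp [map_add, hx, hy]

@[simp] lemma dualMap_zero_apply' {V : Type*} [AddCommGroup V] [Module K V] (g : Module.Dual K V) :
    (0 : V →ₗ[K] V).dualMap g = 0 := by
  ext x; simp

lemma dualMap_add_apply' (φ ψ : V →ₗ[K] V) (g : Module.Dual K V) :
    (φ + ψ).dualMap g = φ.dualMap g + ψ.dualMap g := by
  ext x; simp

lemma dualMap_sub_apply' (φ ψ : V →ₗ[K] V) (g : Module.Dual K V) :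
    (φ - ψ).dualMap g = φ.dualMap g - ψ.dualMap g := by
  ext x; simp

end pybeHelpers

section pybeMain
variable {K : Type*} [Field K] {A : Type*} [AddCommGroup A] [Module K A]

lemma Tten_eq_ctrP (s : A ⊗[K] A) (f : Module.Dual K A) : Tten s f = ctrP f s := by
  induction s using TensorProduct.induction_on with
  | zero => simp [Tten]
  | tmul a b => simp [Tten]
  | add x y hx hy => simp [Tten, map_add, LinearMap.add_apply] at hx hy ⊢; rw [hx, hy]

@[simp] lemma mulT_tmul (m : A →ₗ[K] A →ₗ[K] A) (x y : A) :
    mulT m (x ⊗ₜ[K] y) = m x y := rfl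

noncomputable def c2P (f g : Module.Dual K A) : (A ⊗[K] A) ⊗[K] A →ₗ[K] A :=
  ctrP g ∘ₗ ctrP f ∘ₗ (TensorProduct.assoc K A A A).toLinearMap

@[simp] lemma c2P_tmul (f g : Module.Dual K A) (x y z : A) :
    c2P f g ((x ⊗ₜ[K] y) ⊗ₜ[K] z) = f x • g y • z := by
  simp [c2P]

lemma eq_zero_of_c2P [FiniteDimensional K A] (t : (A ⊗[K] A) ⊗[K] A)
    (h : ∀ f g, c2P f g t = 0) : t = 0 := by
  have h1 : ∀ f, ctrP f ((TensorProduct.assoc K A A A) t) = 0 := by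
    intro f
    exact ctrP_eq_zero _ (fun g => h f g)
  have h2 : (TensorProduct.assoc K A A A) t = 0 := ctrP_eq_zero _ h1
  exact ((TensorProduct.assoc K A A A).map_eq_zero_iff).mp h2

end pybeMain

section pybeQuad
variable {K : Type*} [Field K] {A : Type*} [AddCommGroup A] [Module K A]

lemma quad1 (m : A →ₗ[K] A →ₗ[K] A) (f g : Module.Dual K A) (s t : A ⊗[K] A) :
    c2P f g (p12_23 m (s ⊗ₜ[K] t)) = ctrP ((m (ctrP f s)).dualMap g) t := by
  induction s using TensorProduct.induction_on with
  | zero => simp [zero_tmul]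
  | tmul a b =>
    induction t using TensorProduct.induction_on with
    | zero => simp [tmul_zero]
    | tmul c d =>
      simp [p12_23, mulT, c2P, mul_comm, smul_smul]
    | add x y hx hy => simp only [tmul_add, map_add, hx, hy]
  | add x y hx hy =>
    simp only [add_tmul, map_add, hx, hy, dualMap_add_apply', ctrP_add_left]

lemma quad2 (m : A →ₗ[K] A →ₗ[K] A) (f g : Module.Dual K A) (s t : A ⊗[K] A) :
    c2P f g (p13_23 m (s ⊗ₜ[K] t)) = m (ctrP f s) (ctrP g t) := by
  induction s using TensorProduct.induction_on with
  | zero => simp [zero_tmul]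
  | tmul a b =>
    induction t using TensorProduct.induction_on with
    | zero => simp [tmul_zero]
    | tmul c d =>
      simp [p13_23, mulT, c2P, mul_comm, smul_smul]
    | add x y hx hy => simp only [tmul_add, map_add, hx, hy]
  | add x y hx hy =>
    simp only [add_tmul, map_add, hx, hy, LinearMap.add_apply]

lemma quad3 (m : A →ₗ[K] A →ₗ[K] A) (f g : Module.Dual K A) (s t : A ⊗[K] A) :
    c2P f g (p12_13 m (s ⊗ₜ[K] t))
      = ctrP ((m (ctrP g (TensorProduct.comm K A A s))).dualMap f) t := by
  induction s using TensorProduct.induction_on with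
  | zero => simp [zero_tmul]
  | tmul a b =>
    induction t using TensorProduct.induction_on with
    | zero => simp [tmul_zero]
    | tmul c d =>
      simp [p12_13, mulT, c2P, mul_comm, smul_smul]
    | add x y hx hy => simp only [tmul_add, map_add, hx, hy]
  | add x y hx hy =>
    simp only [add_tmul, map_add, hx, hy, dualMap_add_apply', ctrP_add_left]

lemma quad4 (m : A →ₗ[K] A →ₗ[K] A) (f g : Module.Dual K A) (s t : A ⊗[K] A) :
    c2P f g (p13_12 m (s ⊗ₜ[K] t))
      = ctrP ((m.flip (ctrP g (TensorProduct.comm K A A t))).dualMap f) s := by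
  induction s using TensorProduct.induction_on with
  | zero => simp [zero_tmul]
  | tmul a b =>
    induction t using TensorProduct.induction_on with
    | zero => simp [tmul_zero]
    | tmul c d =>
      simp [p13_12, mulT, c2P, mul_comm, smul_smul]
    | add x y hx hy =>
      simp only [tmul_add, map_add, hx, hy, dualMap_add_apply', ctrP_add_left]
  | add x y hx hy => simp only [add_tmul, map_add, hx, hy]

lemma masterP (m : A →ₗ[K] A →ₗ[K] A) (r : A ⊗[K] A) (f g : Module.Dual K A) :
    c2P f g (ybrac m r)
      = ctrP ((m (ctrP f r)).dualMap g) r - m (ctrP f r) (ctrP g r)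
        + ctrP ((m (ctrP g (TensorProduct.comm K A A r))).dualMap f) r
        - ctrP ((m.flip (ctrP g (TensorProduct.comm K A A r))).dualMap f) r := by
  simp only [ybrac, map_sub, map_add, quad1, quad2, quad3, quad4]

end pybeQuad

theorem stmt6 [FiniteDimensional K A] (m : A →ₗ[K] A →ₗ[K] A) (hm : IsPermMul m)
    (r : A ⊗[K] A) (hinv : RadInv m (r - (TensorProduct.comm K A A) r)) :
    IsPYBESol m r ↔
      ∀ f g : Module.Dual K A,
        m (Tten ((TensorProduct.comm K A A) r) f) (Tten ((TensorProduct.comm K A A) r) g)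
          = Tten ((TensorProduct.comm K A A) r) ((m (Tten r f)).dualMap g
              + (m (Tten ((TensorProduct.comm K A A) r) g)
                 - m.flip (Tten ((TensorProduct.comm K A A) r) g)).dualMap f) := by
  simp only [Tten_eq_ctrP]
  have hσσ : (TensorProduct.comm K A A) ((TensorProduct.comm K A A) r) = r :=
    comm_comm_self r
  have hinv2 : ∀ a : A,
      TensorProduct.map (m.flip a) LinearMap.id (r - (TensorProduct.comm K A A) r)
      = TensorProduct.map LinearMap.id (m a - m.flip a)
          (r - (TensorProduct.comm K A A) r) := by
    intro a
    have h := congrArg (TensorProduct.comm K A A) (hinv a)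
    rw [comm_map_swap, comm_map_swap] at h
    have hc : (TensorProduct.comm K A A) (r - (TensorProduct.comm K A A) r)
        = -(r - (TensorProduct.comm K A A) r) := by
      rw [map_sub, hσσ]; abel
    rw [hc, map_neg, map_neg, neg_inj] at h
    exact h
  have E1 : ∀ (a : A) (f : Module.Dual K A),
      ctrP ((m a - m.flip a).dualMap f) (r - (TensorProduct.comm K A A) r)
      = (m.flip a) (ctrP f (r - (TensorProduct.comm K A A) r)) := by
    intro a f
    rw [← ctrP_map_left f (m a - m.flip a), ← hinv a, ctrP_map_right]
  have E2 : ∀ (a : A) (f : Module.Dual K A),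
      ctrP ((m.flip a).dualMap f) (r - (TensorProduct.comm K A A) r)
      = (m a - m.flip a) (ctrP f (r - (TensorProduct.comm K A A) r)) := by
    intro a f
    rw [← ctrP_map_left f (m.flip a), hinv2 a, ctrP_map_right]
  have E3 : ∀ (a : A) (f : Module.Dual K A),
      ctrP ((m a).dualMap f) (r - (TensorProduct.comm K A A) r)
      = m a (ctrP f (r - (TensorProduct.comm K A A) r)) := by
    intro a f
    have hd : (m a).dualMap f
        = (m a - m.flip a).dualMap f + (m.flip a).dualMap f := by
      rw [← dualMap_add_apply', sub_add_cancel]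
    rw [hd, ctrP_add_left, E1, E2]
    simp only [LinearMap.sub_apply]
    abel
  have key : ∀ f g : Module.Dual K A, c2P f g (ybrac m r)
      = ctrP ((m (ctrP f r)).dualMap g
          + (m (ctrP g ((TensorProduct.comm K A A) r))
             - m.flip (ctrP g ((TensorProduct.comm K A A) r))).dualMap f)
          ((TensorProduct.comm K A A) r)
        - m (ctrP f ((TensorProduct.comm K A A) r))
            (ctrP g ((TensorProduct.comm K A A) r)) := by
    intro f g
    rw [masterP, ctrP_add_left, dualMap_sub_apply', ctrP_sub_left]
    have eq1 : ctrP ((m (ctrP f r)).dualMap g) r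
          - ctrP ((m (ctrP f r)).dualMap g) ((TensorProduct.comm K A A) r)
        = m (ctrP f r) (ctrP g r)
          - m (ctrP f r) (ctrP g ((TensorProduct.comm K A A) r)) := by
      have h := E3 (ctrP f r) g
      simp only [map_sub] at h
      exact h
    have eq2 : (ctrP ((m (ctrP g ((TensorProduct.comm K A A) r))).dualMap f) r
            - ctrP ((m.flip (ctrP g ((TensorProduct.comm K A A) r))).dualMap f) r)
          - (ctrP ((m (ctrP g ((TensorProduct.comm K A A) r))).dualMap f)
                ((TensorProduct.comm K A A) r)
            - ctrP ((m.flip (ctrP g ((TensorProduct.comm K A A) r))).dualMap f)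
                ((TensorProduct.comm K A A) r))
        = m (ctrP f r) (ctrP g ((TensorProduct.comm K A A) r))
          - m (ctrP f ((TensorProduct.comm K A A) r))
              (ctrP g ((TensorProduct.comm K A A) r)) := by
      have h := E1 (ctrP g ((TensorProduct.comm K A A) r)) f
      simp only [dualMap_sub_apply', ctrP_sub_left, map_sub, LinearMap.flip_apply] at h
      exact h
    have eq1' : ctrP ((m (ctrP f r)).dualMap g) r
        = ctrP ((m (ctrP f r)).dualMap g) ((TensorProduct.comm K A A) r)
          + (m (ctrP f r) (ctrP g r)
            - m (ctrP f r) (ctrP g ((TensorProduct.comm K A A) r))) := by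
      rw [← eq1]; abel
    have eq2' : ctrP ((m (ctrP g ((TensorProduct.comm K A A) r))).dualMap f) r
        = ctrP ((m (ctrP g ((TensorProduct.comm K A A) r))).dualMap f)
            ((TensorProduct.comm K A A) r)
          + ((ctrP ((m.flip (ctrP g ((TensorProduct.comm K A A) r))).dualMap f) r
              - ctrP ((m.flip (ctrP g ((TensorProduct.comm K A A) r))).dualMap f)
                  ((TensorProduct.comm K A A) r))
            + (m (ctrP f r) (ctrP g ((TensorProduct.comm K A A) r))
              - m (ctrP f ((TensorProduct.comm K A A) r))
                  (ctrP g ((TensorProduct.comm K A A) r)))) := by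
      rw [← eq2]; abel
    rw [eq1', eq2']
    abel
  constructor
  · intro hr f g
    have hk := key f g
    rw [show ybrac m r = 0 from hr, map_zero] at hk
    have := sub_eq_zero.mp hk.symm
    exact this.symm
  · intro h
    show ybrac m r = 0
    apply eq_zero_of_c2P
    intro f g
    rw [key f g]
    exact sub_eq_zero_of_eq (h f g).symm

end
end

section
/- Let (A, ·) be a perm algebra and r ∈ A ⊗ A skew-symmetric and (R, ad)-invariant. Define a* ◇ b* = L*(Tᵣ(a*))b* on A*. Then (A*, L*, ad*, ◇) is an A-perm algebra; in particular (A*, ◇) is a perm algebra satisfying (a*◇b*)◇c* = (b*◇a*)◇c* = a*◇(b*◇c*). -/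
open TensorProduct

section
variable {K : Type*} [Field K] {A : Type*} [AddCommGroup A] [Module K A]

variable {V : Type*} [AddCommGroup V] [Module K V]

lemma Tten_apply_tmul (a b : A) (φ : Module.Dual K A) :
    Tten (K := K) (a ⊗ₜ[K] b) φ = φ a • b := by
  simp [Tten]

lemma Tten_add (x y : A ⊗[K] A) :
    Tten (K := K) (x + y) = Tten x + Tten y := by
  unfold Tten; exact map_add _ x y

lemma Tten_zero : Tten (K := K) (0 : A ⊗[K] A) = 0 := by
  unfold Tten; exact map_zero _

lemma Tten_map_left (h : A →ₗ[K] A) (s : A ⊗[K] A) (φ : Module.Dual K A) :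
    Tten (TensorProduct.map h LinearMap.id s) φ
      = Tten s (Module.Dual.transpose (R := K) h φ) := by
  induction s using TensorProduct.induction_on with
  | zero => simp [Tten_zero]
  | tmul a b => simp [Tten_apply_tmul, Module.Dual.transpose_apply]
  | add x y hx hy => simp [map_add, Tten_add, hx, hy]

lemma Tten_map_right (h : A →ₗ[K] A) (s : A ⊗[K] A) (φ : Module.Dual K A) :
    Tten (TensorProduct.map LinearMap.id h s) φ = h (Tten s φ) := by
  induction s using TensorProduct.induction_on with
  | zero => simp [Tten_zero]
  | tmul a b => simp [Tten_apply_tmul]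
  | add x y hx hy => simp [map_add, Tten_add, hx, hy]

lemma Tten_pair_swap (s : A ⊗[K] A) (φ ψ : Module.Dual K A) :
    φ (Tten (K := K) s ψ) = ψ (Tten (TensorProduct.comm K A A s) φ) := by
  induction s using TensorProduct.induction_on with
  | zero => simp [Tten_zero]
  | tmul a b => simp [Tten_apply_tmul]; ring
  | add x y hx hy => simp [map_add, Tten_add, hx, hy]

lemma Tten_neg (x : A ⊗[K] A) : Tten (K := K) (-x) = - Tten x := by
  unfold Tten; exact map_neg _ x

theorem stmt10 [FiniteDimensional K A] (m : A →ₗ[K] A →ₗ[K] A) (hm : IsPermMul m)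
    (r : A ⊗[K] A) (hskew : (TensorProduct.comm K A A) r = -r) (hinv : RadInv m r) :
    IsAPermAlg m (Module.Dual.transpose (R := K) ∘ₗ m)
      (Module.Dual.transpose (R := K) ∘ₗ (m - m.flip))
      ((Module.Dual.transpose (R := K) ∘ₗ m) ∘ₗ Tten r) := by
  have P1 : ∀ a b c : A, m a (m b c) = m (m a b) c := fun a b c => (hm a b c).1
  have P2 : ∀ a b c : A, m (m a b) c = m (m b a) c := fun a b c => (hm a b c).2
  -- (**) : (R(y) ⊗ id) r = (id ⊗ ad(y)) r
  have hstar : ∀ y : A, TensorProduct.map (m.flip y) LinearMap.id r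
      = TensorProduct.map LinearMap.id (m y - m.flip y) r := by
    intro y
    have h1 := congrArg (TensorProduct.comm K A A) (hinv y)
    rw [← TensorProduct.map_comm, ← TensorProduct.map_comm, hskew, map_neg, map_neg,
      neg_inj] at h1
    exact h1
  -- key: (L(a) ⊗ id) r = (id ⊗ L(a)) r
  have hL1 : ∀ a : A, TensorProduct.map (m a) LinearMap.id r
      = TensorProduct.map LinearMap.id (m a) r := by
    intro a
    have e : m a = (m a - m.flip a) + m.flip a := by abel
    rw [e, TensorProduct.map_add_left, TensorProduct.map_add_right]
    simp only [LinearMap.add_apply]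
    rw [hstar a, hinv a]
    abel
  -- pairing skew-symmetry
  have hpair : ∀ φ ψ : Module.Dual K A, φ (Tten (K := K) r ψ) = - ψ (Tten r φ) := by
    intro φ ψ
    rw [Tten_pair_swap r φ ψ, hskew, Tten_neg, LinearMap.neg_apply, map_neg]
  -- Tten of transposes
  have hTl : ∀ (h : A →ₗ[K] A) (φ : Module.Dual K A),
      Tten (K := K) r (Module.Dual.transpose (R := K) h φ)
        = Tten (TensorProduct.map h LinearMap.id r) φ := fun h φ => (Tten_map_left h r φ).symm
  have hTL : ∀ (a : A) (φ : Module.Dual K A),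
      Tten (K := K) r (Module.Dual.transpose (R := K) (m a) φ) = m a (Tten r φ) := by
    intro a φ; rw [hTl, hL1, Tten_map_right]
  have hTR : ∀ (a : A) (φ : Module.Dual K A),
      Tten (K := K) r (Module.Dual.transpose (R := K) (m a - m.flip a) φ)
        = m (Tten r φ) a := by
    intro a φ
    rw [hTl, ← hinv a, Tten_map_right]
    rfl
  -- L(ad a c) = 0
  have hLy0 : ∀ a c : A, m (m a c - m c a) = 0 := by
    intro a c; ext x
    simp only [map_sub, LinearMap.sub_apply, LinearMap.zero_apply]
    rw [P2]; abel
  -- basic application lemmas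
  have e1 : ∀ (φ ψ : Module.Dual K A) (c : A),
      (((Module.Dual.transpose (R := K) ∘ₗ m) ∘ₗ Tten r) φ ψ) c
        = ψ (m (Tten r φ) c) := by
    intro φ ψ c; simp [Module.Dual.transpose_apply]
  have e2 : ∀ (a : A) (φ : Module.Dual K A) (c : A),
      ((Module.Dual.transpose (R := K) ∘ₗ (m - m.flip)) a φ) c
        = φ (m a c - m c a) := by
    intro a φ c
    simp [Module.Dual.transpose_apply, LinearMap.sub_apply, map_sub]
  have e3 : ∀ (a : A) (φ : Module.Dual K A) (c : A),
      ((Module.Dual.transpose (R := K) ∘ₗ m) a φ) c = φ (m a c) := by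
    intro a φ c; simp [Module.Dual.transpose_apply]
  have keyT : ∀ φ ψ : Module.Dual K A,
      Tten (K := K) r (((Module.Dual.transpose (R := K) ∘ₗ m) ∘ₗ Tten r) φ ψ)
        = m (Tten r φ) (Tten r ψ) := by
    intro φ ψ
    have h0 : ((Module.Dual.transpose (R := K) ∘ₗ m) ∘ₗ Tten r) φ ψ
        = Module.Dual.transpose (R := K) (m (Tten r φ)) ψ := by
      simp [LinearMap.comp_apply]
    rw [h0, hTL]
  have keyTl : ∀ (a : A) (φ : Module.Dual K A),
      Tten (K := K) r ((Module.Dual.transpose (R := K) ∘ₗ m) a φ)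
        = m a (Tten r φ) := by
    intro a φ
    have h0 : (Module.Dual.transpose (R := K) ∘ₗ m) a φ
        = Module.Dual.transpose (R := K) (m a) φ := by simp [LinearMap.comp_apply]
    rw [h0, hTL]
  have keyTr : ∀ (a : A) (φ : Module.Dual K A),
      Tten (K := K) r ((Module.Dual.transpose (R := K) ∘ₗ (m - m.flip)) a φ)
        = m (Tten r φ) a := by
    intro a φ
    have h0 : (Module.Dual.transpose (R := K) ∘ₗ (m - m.flip)) a φ
        = Module.Dual.transpose (R := K) (m a - m.flip a) φ := by
      simp [LinearMap.comp_apply]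
    rw [h0, hTR]
  have C1' : ∀ (φ ψ : Module.Dual K A) (y : A), m y = 0 →
      ψ (m (Tten (K := K) r φ) y) = φ (m (Tten r ψ) y) := by
    intro φ ψ y hy
    calc ψ (m (Tten (K := K) r φ) y)
        = (Module.Dual.transpose (R := K) (m.flip y) ψ) (Tten r φ) := by
          rw [Module.Dual.transpose_apply]; rfl
      _ = - φ (Tten r (Module.Dual.transpose (R := K) (m.flip y) ψ)) := hpair _ φ
      _ = - φ (Tten (TensorProduct.map (m.flip y) LinearMap.id r) ψ) := by rw [hTl]
      _ = - φ (Tten (TensorProduct.map LinearMap.id (m y - m.flip y) r) ψ) := by rw [hstar y]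
      _ = - φ ((m y - m.flip y) (Tten r ψ)) := by rw [Tten_map_right]
      _ = φ (m (Tten r ψ) y) := by
          rw [hy]
          simp [LinearMap.sub_apply, LinearMap.flip_apply]
  refine ⟨?_, ?_, ?_, ?_⟩
  · -- IsPermRep
    intro a b
    refine ⟨?_, ?_, ?_, ?_, ?_⟩ <;>
    · apply LinearMap.ext; intro f; apply LinearMap.ext; intro c
      simp only [LinearMap.comp_apply, LinearMap.sub_apply, Module.Dual.transpose_apply,
        LinearMap.flip_apply, map_sub]
      simp only [map_sub, LinearMap.sub_apply, P1, P2]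
      try abel
  · -- IsPermMul
    intro f g h
    constructor
    · apply LinearMap.ext; intro c
      rw [e1, e1, e1, keyT, P1, P2]
    · apply LinearMap.ext; intro c
      rw [e1, e1, keyT, keyT, P2]
  · -- third clause
    intro a f g
    constructor
    · apply LinearMap.ext; intro c
      rw [e2, e2, e1, e1]
      exact C1' f g _ (hLy0 a c)
    · apply LinearMap.ext; intro c
      rw [e2, e1, e1, e2]
      congr 1
      simp only [map_sub, P1, P2]
  · -- fourth clause
    intro a f g
    refine ⟨?_, ?_, ?_⟩
    · apply LinearMap.ext; intro c
      rw [e1, e1, keyTl, keyTr, P2]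
    · apply LinearMap.ext; intro c
      rw [e1, e3, e1, keyTl]
      congr 1
      simp only [P1, P2]
    · apply LinearMap.ext; intro c
      rw [e3, e1, e1, e3]
      congr 1
      simp only [P1, P2]

end
end

section
/- Let (A, ·) be a perm algebra, r ∈ A ⊗ A a solution of the perm Yang-Baxter equation whose skew-symmetric part is (R, ad)-invariant, and T_{r−σ(r)}: A* → A bijective (factorizable case). Define 𝔅(a, b) = −λ⟨T_{r−σ(r)}⁻¹(a), b⟩ for a fixed λ ≠ 0, and P(a) = Tᵣ(𝔅♯(a)). Then (A, ·, 𝔅, P) is a quadratic Rota-Baxter perm algebra of weight λ. -/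
open TensorProduct

section
variable {K : Type*} [Field K] {A : Type*} [AddCommGroup A] [Module K A]

variable {V : Type*} [AddCommGroup V] [Module K V]

/-- Rota-Baxter operator of weight `lam` on a perm algebra. -/
def IsRB (m : A →ₗ[K] A →ₗ[K] A) (lam : K) (P : A →ₗ[K] A) : Prop :=
  ∀ a b : A, m (P a) (P b) = P (m (P a) b + m a (P b) + lam • m a b)

/-- quadratic Rota-Baxter perm algebra of weight `lam` -/
def IsQuadRB (m : A →ₗ[K] A →ₗ[K] A) (B : A →ₗ[K] A →ₗ[K] K)
    (P : A →ₗ[K] A) (lam : K) : Prop :=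
  IsPermMul m ∧ Function.Bijective B ∧ (∀ a b : A, B a b = - B b a) ∧
  (∀ a b c : A, B (m a b) c = B a (m b c - m c b)) ∧ IsRB m lam P ∧
  ∀ a b : A, B (P a) b + B a (P b) + lam * B a b = 0


@[simp] lemma Tten_tmul {K : Type*} [Field K] {A : Type*} [AddCommGroup A] [Module K A]
    (a b : A) (f : Module.Dual K A) : Tten (a ⊗ₜ[K] b) f = f a • b := by
  simp [Tten]

@[simp] lemma Tten_add_s17 {K : Type*} [Field K] {A : Type*} [AddCommGroup A] [Module K A]
    (s s' : A ⊗[K] A) (f : Module.Dual K A) :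
    Tten (s + s') f = Tten s f + Tten s' f := by simp [Tten]

@[simp] lemma Tten_zero_s17 {K : Type*} [Field K] {A : Type*} [AddCommGroup A] [Module K A]
    (f : Module.Dual K A) : Tten (0 : A ⊗[K] A) f = 0 := by simp [Tten]

@[simp] lemma Tten_sub {K : Type*} [Field K] {A : Type*} [AddCommGroup A] [Module K A]
    (s s' : A ⊗[K] A) (f : Module.Dual K A) :
    Tten (s - s') f = Tten s f - Tten s' f := by simp [Tten]

lemma Tten_map (φ ψ : A →ₗ[K] A) (s : A ⊗[K] A) (f : Module.Dual K A) :
    Tten (TensorProduct.map φ ψ s) f = ψ (Tten s (f ∘ₗ φ)) := by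
  induction s using TensorProduct.induction_on with
  | zero => simp
  | tmul a b => simp
  | add x y hx hy => simp [map_add, hx, hy]

lemma Tten_comm (s : A ⊗[K] A) (f g : Module.Dual K A) :
    f (Tten ((TensorProduct.comm K A A) s) g) = g (Tten s f) := by
  induction s using TensorProduct.induction_on with
  | zero => simp
  | tmul a b => simp; ring
  | add x y hx hy => simp [map_add, hx, hy]

noncomputable def ctr (f g : Module.Dual K A) : (A ⊗[K] A) ⊗[K] A →ₗ[K] A :=
  TensorProduct.lift ((LinearMap.lsmul K A).comp (TensorProduct.lift (LinearMap.mk₂ K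
    (fun x y => f x * g y)
    (by intros; simp [add_mul]) (by intros; simp [mul_assoc])
    (by intros; simp [mul_add]) (by intros; simp; ring))))

@[simp] lemma ctr_tmul (f g : Module.Dual K A) (x y z : A) :
    ctr f g ((x ⊗ₜ[K] y) ⊗ₜ[K] z) = (f x * g y) • z := by simp [ctr]

lemma c1323 (m : A →ₗ[K] A →ₗ[K] A) (f g : Module.Dual K A) (s t : A ⊗[K] A) :
    ctr f g (p13_23 m (s ⊗ₜ t)) = m (Tten s f) (Tten t g) := by
  induction s using TensorProduct.induction_on with
  | zero => simp [p13_23]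
  | add x y hx hy => simp only [add_tmul, map_add, hx, hy, Tten_add_s17, LinearMap.add_apply]
  | tmul a b =>
    induction t using TensorProduct.induction_on with
    | zero => simp [p13_23]
    | add x y hx hy => simp only [tmul_add, map_add, hx, hy, Tten_add_s17]
    | tmul c d => simp [p13_23, mulT, mul_smul, smul_comm (g c) (f a)]

lemma c1223 (m : A →ₗ[K] A →ₗ[K] A) (f g : Module.Dual K A) (s t : A ⊗[K] A) :
    ctr f g (p12_23 m (s ⊗ₜ t)) = Tten t (g ∘ₗ m (Tten s f)) := by
  induction s using TensorProduct.induction_on with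
  | zero => simp [p12_23]
  | add x y hx hy =>
    simp only [add_tmul, map_add, hx, hy, Tten_add_s17, LinearMap.comp_add]
  | tmul a b =>
    induction t using TensorProduct.induction_on with
    | zero => simp [p12_23]
    | add x y hx hy => simp only [tmul_add, map_add, hx, hy, Tten_add_s17]
    | tmul c d => simp [p12_23, mulT, mul_smul, mul_comm (f a)]

lemma c1213 (m : A →ₗ[K] A →ₗ[K] A) (f g : Module.Dual K A) (s t : A ⊗[K] A) :
    ctr f g (p12_13 m (s ⊗ₜ t)) = Tten t (f ∘ₗ m (Tten ((TensorProduct.comm K A A) s) g)) := by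
  induction s using TensorProduct.induction_on with
  | zero => simp [p12_13]
  | add x y hx hy =>
    simp only [add_tmul, map_add, hx, hy, Tten_add_s17, LinearMap.comp_add]
  | tmul a b =>
    induction t using TensorProduct.induction_on with
    | zero => simp [p12_13]
    | add x y hx hy => simp only [tmul_add, map_add, hx, hy, Tten_add_s17]
    | tmul c d => simp [p12_13, mulT, mul_smul, mul_comm (g b)]

lemma c1312 (m : A →ₗ[K] A →ₗ[K] A) (f g : Module.Dual K A) (s t : A ⊗[K] A) :
    ctr f g (p13_12 m (s ⊗ₜ t)) = Tten s (f ∘ₗ m.flip (Tten ((TensorProduct.comm K A A) t) g)) := by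
  induction t using TensorProduct.induction_on with
  | zero => simp [p13_12]
  | add x y hx hy =>
    simp only [tmul_add, map_add, hx, hy, Tten_add_s17, LinearMap.comp_add]
  | tmul c d =>
    induction s using TensorProduct.induction_on with
    | zero => simp [p13_12]
    | add x y hx hy => simp only [add_tmul, map_add, hx, hy, Tten_add_s17, LinearMap.add_apply]
    | tmul a b => simp [p13_12, mulT, mul_smul, mul_comm (g d)]

theorem stmt17 [FiniteDimensional K A] (m : A →ₗ[K] A →ₗ[K] A) (hm : IsPermMul m)
    (r : A ⊗[K] A) (hr : IsPYBESol m r)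
    (hinv : RadInv m (r - (TensorProduct.comm K A A) r))
    (Tinv : A →ₗ[K] Module.Dual K A)
    (h1 : ∀ a : A, Tten (r - (TensorProduct.comm K A A) r) (Tinv a) = a)
    (h2 : ∀ f : Module.Dual K A, Tinv (Tten (r - (TensorProduct.comm K A A) r) f) = f)
    (lam : K) (hlam : lam ≠ 0) :
    IsQuadRB m ((-lam) • Tinv) (Tten r ∘ₗ ((-lam) • Tinv)) lam := by
  classical
  set σr : A ⊗[K] A := (TensorProduct.comm K A A) r with hσr
  -- skew-symmetry of Tinv as a bilinear pairing
  have hskew : ∀ x y : A, Tinv x y = -(Tinv y x) := by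
    intro x y
    have e1 : Tinv x y = Tinv x (Tten r (Tinv y)) - Tinv y (Tten r (Tinv x)) := by
      conv_lhs => rw [← h1 y]
      rw [Tten_sub, map_sub, Tten_comm]
    have e2 : Tinv y x = Tinv y (Tten r (Tinv x)) - Tinv x (Tten r (Tinv y)) := by
      conv_lhs => rw [← h1 x]
      rw [Tten_sub, map_sub, Tten_comm]
    rw [e1, e2]; ring
  -- consequence of (R, ad)-invariance
  have inv1 : ∀ (a : A) (f : Module.Dual K A),
      m (Tten (r - σr) f) a = Tten (r - σr) (f ∘ₗ (m a - m.flip a)) := by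
    intro a f
    have h := congrArg (fun s => Tten s f) (hinv a)
    simp only [Tten_map, LinearMap.comp_id, LinearMap.id_coe, id_eq,
      LinearMap.flip_apply] at h
    exact h
  -- key identity for Tinv of a product
  have key : ∀ x y : A, Tinv (m x y) = (Tinv x) ∘ₗ (m y - m.flip y) := by
    intro x y
    have hx : m x y = Tten (r - σr) ((Tinv x) ∘ₗ (m y - m.flip y)) := by
      conv_lhs => rw [← h1 x]
      exact inv1 y (Tinv x)
    rw [hx, h2]
  have hkey : ∀ x y c : A, Tinv (m x y) c = Tinv x (m y c) - Tinv x (m c y) := by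
    intro x y c
    rw [key x y]
    simp only [LinearMap.comp_apply, LinearMap.sub_apply, LinearMap.flip_apply, map_sub]
  have hlam' : (-lam : K) ≠ 0 := neg_ne_zero.mpr hlam
  refine ⟨hm, ?_, ?_, ?_, ?_, ?_⟩
  · -- bijectivity
    refine Function.bijective_iff_has_inverse.mpr
      ⟨fun φ => Tten (r - σr) ((-lam)⁻¹ • φ), ?_, ?_⟩
    · intro a
      simp only [LinearMap.smul_apply, smul_smul, inv_mul_cancel₀ hlam', one_smul, map_smul]
      exact h1 a
    · intro φ
      simp only [LinearMap.smul_apply, map_smul, h2, smul_smul,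
        mul_inv_cancel₀ hlam', inv_mul_cancel₀ hlam', one_smul]
  · -- skew symmetry
    intro a b
    simp only [LinearMap.smul_apply, smul_eq_mul]
    rw [hskew a b]; ring
  · -- invariance
    intro a b c
    simp only [LinearMap.smul_apply, smul_eq_mul, map_sub]
    rw [hkey a b c]; ring
  · -- Rota-Baxter
    intro a b
    simp only [LinearMap.comp_apply, LinearMap.smul_apply]
    set f : Module.Dual K A := (-lam) • Tinv a with hf
    set g : Module.Dual K A := (-lam) • Tinv b with hg
    set u : A := Tten r f with hu
    set v : A := Tten r g with hv
    -- Yang-Baxter consequence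
    have e0 : ctr f g (ybrac m r) = 0 := by
      rw [show ybrac m r = 0 from hr]; simp
    have hyb : m u v = Tten r (g ∘ₗ m u) + Tten r (f ∘ₗ m (Tten σr g))
        - Tten r (f ∘ₗ m.flip (Tten σr g)) := by
      have e1 : Tten r (g ∘ₗ m u) - m u v + Tten r (f ∘ₗ m (Tten σr g))
          - Tten r (f ∘ₗ m.flip (Tten σr g)) = 0 := by
        have := e0
        simp only [ybrac, map_sub, map_add, c1223, c1323, c1213, c1312, ← hσr, hu, hv] at this
        exact this
      have e2 : (Tten r (g ∘ₗ m u) + Tten r (f ∘ₗ m (Tten σr g))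
          - Tten r (f ∘ₗ m.flip (Tten σr g))) - m u v = 0 := by
        rw [← e1]; abel
      exact (sub_eq_zero.mp e2).symm
    -- σr-part of Tten applied to g
    have hw : Tten σr g = v + lam • b := by
      have h3 : Tten r g - Tten σr g = (-lam) • b := by
        rw [← Tten_sub, hg, map_smul, h1 b]
      rw [sub_eq_iff_eq_add] at h3
      rw [hv, h3, neg_smul]; abel
    -- the functional identity
    have hfun : (-lam) • Tinv (m u b + m a v + lam • m a b)
        = g ∘ₗ m u + f ∘ₗ m (Tten σr g) - f ∘ₗ m.flip (Tten σr g) := by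
      ext c
      have hgmu : g (m u c) = -lam * (Tinv (m u b) c) := by
        rw [hkey u b c, hg]
        simp only [LinearMap.smul_apply, smul_eq_mul]
        rw [hskew b (m u c), hkey u c b]
        ring
      simp only [LinearMap.smul_apply, LinearMap.add_apply, LinearMap.sub_apply,
        LinearMap.comp_apply, LinearMap.flip_apply, map_add, map_smul, smul_eq_mul, hw]
      rw [hgmu]
      simp only [map_add, map_smul, LinearMap.add_apply, smul_eq_mul,
        hkey a v c, hkey a b c, hf, LinearMap.smul_apply]
      ring
    rw [hfun, map_sub, map_add]
    exact hyb
  · -- adjointness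
    intro a b
    have hPa : (Tten r ∘ₗ ((-lam) • Tinv)) a = (-lam) • Tten r (Tinv a) := by
      simp only [LinearMap.comp_apply, LinearMap.smul_apply, map_smul]
    have hPb : (Tten r ∘ₗ ((-lam) • Tinv)) b = (-lam) • Tten r (Tinv b) := by
      simp only [LinearMap.comp_apply, LinearMap.smul_apply, map_smul]
    have hXY : Tinv a b = Tinv a (Tten r (Tinv b)) - Tinv b (Tten r (Tinv a)) := by
      conv_lhs => rw [← h1 b]
      rw [Tten_sub, map_sub, Tten_comm]
    rw [hPa, hPb]
    simp only [LinearMap.smul_apply, smul_eq_mul, map_smul]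
    rw [hskew (Tten r (Tinv a)) b, hXY]
    ring

end
end
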